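/- Let d ≥ 0, A a finite subset of ℝ^d, s a nonnegative integer, and p a real polynomial in 2d variables of total degree at most 2s+1. Define the quadratic form Φ_p on the space of functions f : A → ℝ by Φ_p(f) = Σ_{a,b ∈ A} p(a,b) f(a) f(b). If Y is a linear subspace of ℝ^A such that Φ_p(f) > 0 for every nonzero f ∈ Y, then dim Y ≤ dim_s(A). -/

import Mathlib

open MvPolynomial

/-- `dim_s(A)`: the dimension of the space of functions `A → ℝ` that are restrictions to `A`
of `d`-variate real polynomials of total degree at most `s`. -/
noncomputable def polyDim (d s : ℕ) (A : Finset (Fin d → ℝ)) : ℕ :=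
  Module.finrank ℝ (Submodule.span ℝ
    {f : A → ℝ | ∃ q : MvPolynomial (Fin d) ℝ, q.totalDegree ≤ s ∧
      ∀ a : A, f a = eval (a : Fin d → ℝ) q})

/-- If `p` is a real `2d`-variate polynomial of total degree at most `2s+1` and `Y` is a
subspace of `ℝ^A` on which the quadratic form `Φ_p(f) = ∑_{a,b ∈ A} p(a,b) f(a) f(b)` is
positive definite, then `dim Y ≤ dim_s(A)`. -/
theorem finrank_le_polyDim_of_posDef (d s : ℕ) (A : Finset (Fin d → ℝ))
    (p : MvPolynomial (Fin d ⊕ Fin d) ℝ) (hp : p.totalDegree ≤ 2 * s + 1)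
    (Y : Submodule ℝ (A → ℝ))
    (hY : ∀ f ∈ Y, f ≠ 0 →
      0 < ∑ a : A, ∑ b : A,
        eval (Sum.elim (a : Fin d → ℝ) (b : Fin d → ℝ)) p * f a * f b) :
    Module.finrank ℝ Y ≤ polyDim d s A := by
  classical
  set S : Set (A → ℝ) := {f : A → ℝ | ∃ q : MvPolynomial (Fin d) ℝ, q.totalDegree ≤ s ∧
      ∀ a : A, f a = eval (a : Fin d → ℝ) q} with hS
  let e : EuclideanSpace ℝ A ≃ₗ[ℝ] (A → ℝ) := WithLp.linearEquiv 2 ℝ (A → ℝ)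
  let V : Submodule ℝ (EuclideanSpace ℝ A) := (Submodule.span ℝ S).comap (e : EuclideanSpace ℝ A →ₗ[ℝ] (A → ℝ))
  let Y' : Submodule ℝ (EuclideanSpace ℝ A) := Y.comap (e : EuclideanSpace ℝ A →ₗ[ℝ] (A → ℝ))
  -- eval as a sum over the full fintype product
  have heval : ∀ v : (Fin d ⊕ Fin d) → ℝ,
      eval v p = ∑ m ∈ p.support, coeff m p * ∏ i, v i ^ m i := by
    intro v
    rw [MvPolynomial.eval_eq]
    refine Finset.sum_congr rfl fun m _ => ?_
    congr 1
    exact Finset.prod_subset (Finset.subset_univ _)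
      (fun i _ hi => by rw [Finsupp.notMem_support_iff.mp hi, pow_zero])
  -- key vanishing lemma
  have hzero : ∀ f : A → ℝ, (∀ g ∈ S, ∑ a : A, g a * f a = 0) →
      (∑ a : A, ∑ b : A,
        eval (Sum.elim (a : Fin d → ℝ) (b : Fin d → ℝ)) p * f a * f b) = 0 := by
    intro f hf
    have expand : (∑ a : A, ∑ b : A,
        eval (Sum.elim (a : Fin d → ℝ) (b : Fin d → ℝ)) p * f a * f b)
        = ∑ m ∈ p.support, coeff m p *
            ((∑ a : A, (∏ i, (a : Fin d → ℝ) i ^ m (Sum.inl i)) * f a) *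
             (∑ b : A, (∏ i, (b : Fin d → ℝ) i ^ m (Sum.inr i)) * f b)) := by
      calc (∑ a : A, ∑ b : A,
            eval (Sum.elim (a : Fin d → ℝ) (b : Fin d → ℝ)) p * f a * f b)
          = ∑ a : A, ∑ b : A, ∑ m ∈ p.support, coeff m p *
              ((∏ i, (a : Fin d → ℝ) i ^ m (Sum.inl i)) * f a) *
              ((∏ i, (b : Fin d → ℝ) i ^ m (Sum.inr i)) * f b) := by
            refine Finset.sum_congr rfl fun a _ => Finset.sum_congr rfl fun b _ => ?_
            rw [heval, Finset.sum_mul, Finset.sum_mul]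
            refine Finset.sum_congr rfl fun m _ => ?_
            rw [Fintype.prod_sum_type]
            simp only [Sum.elim_inl, Sum.elim_inr]
            ring
        _ = ∑ a : A, ∑ m ∈ p.support, ∑ b : A, coeff m p *
              ((∏ i, (a : Fin d → ℝ) i ^ m (Sum.inl i)) * f a) *
              ((∏ i, (b : Fin d → ℝ) i ^ m (Sum.inr i)) * f b) :=
            Finset.sum_congr rfl fun a _ => Finset.sum_comm
        _ = ∑ m ∈ p.support, ∑ a : A, ∑ b : A, coeff m p *
              ((∏ i, (a : Fin d → ℝ) i ^ m (Sum.inl i)) * f a) *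
              ((∏ i, (b : Fin d → ℝ) i ^ m (Sum.inr i)) * f b) :=
            Finset.sum_comm
        _ = _ := by
            refine Finset.sum_congr rfl fun m _ => ?_
            rw [Finset.sum_mul_sum, Finset.mul_sum]
            refine Finset.sum_congr rfl fun a _ => ?_
            rw [Finset.mul_sum]
            exact Finset.sum_congr rfl fun b _ => by ring
    rw [expand]
    refine Finset.sum_eq_zero fun m hm => ?_
    -- degree bound : one side has degree ≤ s
    have hdeg : (∑ i, m (Sum.inl i)) + (∑ i, m (Sum.inr i)) ≤ 2 * s + 1 := by
      have h1 : (m.sum fun _ e => e) ≤ p.totalDegree := MvPolynomial.le_totalDegree hm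
      have h2 : (m.sum fun _ e => e) = ∑ i, m i :=
        Finsupp.sum_fintype _ _ (fun _ => rfl)
      rw [h2, Fintype.sum_sum_type] at h1
      omega
    have hcases : (∑ i, m (Sum.inl i)) ≤ s ∨ (∑ i, m (Sum.inr i)) ≤ s := by omega
    have hmem : ∀ (c : Fin d → Fin d ⊕ Fin d), (∑ i, m (c i)) ≤ s →
        (fun a : A => ∏ i, (a : Fin d → ℝ) i ^ m (c i)) ∈ S := by
      intro c hc
      refine ⟨∏ i, (X i : MvPolynomial (Fin d) ℝ) ^ m (c i), ?_, fun a => by simp⟩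
      calc (∏ i, (X i : MvPolynomial (Fin d) ℝ) ^ m (c i)).totalDegree
          ≤ ∑ i, ((X i : MvPolynomial (Fin d) ℝ) ^ m (c i)).totalDegree :=
            MvPolynomial.totalDegree_finset_prod _ _
        _ ≤ ∑ i, m (c i) := Finset.sum_le_sum fun i _ =>
            le_trans (MvPolynomial.totalDegree_pow _ _) (by rw [MvPolynomial.totalDegree_X, mul_one])
        _ ≤ s := hc
    rcases hcases with h | h
    · rw [hf _ (hmem Sum.inl h), zero_mul, mul_zero]
    · rw [hf _ (hmem Sum.inr h), mul_zero, mul_zero]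
  -- disjointness
  have hdisj : Y' ⊓ Vᗮ = ⊥ := by
    rw [Submodule.eq_bot_iff]
    rintro f ⟨hfY, hfV⟩
    by_contra hf0
    have hpos := hY f hfY (by simpa using hf0)
    have hf : ∀ g ∈ S, ∑ a : A, g a * f a = 0 := by
      intro g hg
      have := (Submodule.mem_orthogonal V f).mp hfV (WithLp.toLp 2 g) (Submodule.subset_span hg)
      simpa [PiLp.inner_apply, RCLike.inner_apply, starRingEnd_apply, mul_comm] using this
    have := hzero f hf
    linarith
  -- dimension count
  have h1 : Module.finrank ℝ V + Module.finrank ℝ Vᗮ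
      = Module.finrank ℝ (EuclideanSpace ℝ A) := V.finrank_add_finrank_orthogonal
  have h2 := Submodule.finrank_sup_add_finrank_inf_eq Y' Vᗮ
  rw [hdisj, finrank_bot] at h2
  have h3 : Module.finrank ℝ ↥(Y' ⊔ Vᗮ) ≤ Module.finrank ℝ (EuclideanSpace ℝ A) :=
    Submodule.finrank_le _
  have h4 : Module.finrank ℝ Y = Module.finrank ℝ Y' := by
    show _ = Module.finrank ℝ (Y.comap (e : EuclideanSpace ℝ A →ₗ[ℝ] (A → ℝ)))
    rw [Submodule.comap_equiv_eq_map_symm, LinearEquiv.finrank_map_eq]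
  have h5 : polyDim d s A = Module.finrank ℝ V := by
    show _ = Module.finrank ℝ ((Submodule.span ℝ S).comap (e : EuclideanSpace ℝ A →ₗ[ℝ] (A → ℝ)))
    rw [Submodule.comap_equiv_eq_map_symm, LinearEquiv.finrank_map_eq]; rfl
  omega
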